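/- arXiv:2504.13968 — 2 statements merged into one kernel-verified Lean document; each statement's English description precedes it below -/
import Mathlib

section
/- For complex s with Re(s) > 1, the Dirichlet series of d(n²) satisfies ∑_{n=1}^∞ d(n²)/n^s = ζ(s)³ / ζ(2s). -/
open ArithmeticFunction Finset
open scoped ArithmeticFunction.Moebius ArithmeticFunction.zeta ArithmeticFunction.sigma ArithmeticFunction.Omega

/-- `d(n^2)` as an arithmetic function. -/
noncomputable def dsq : ArithmeticFunction ℂ :=
  ⟨fun n => ((n ^ 2).divisors.card : ℂ), by simp⟩

lemma dsq_apply (n : ℕ) : dsq n = ((n ^ 2).divisors.card : ℂ) := rfl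

/-- `μ(√n)` if `n` is a perfect square, else `0`. -/
noncomputable def sqmu : ArithmeticFunction ℂ :=
  ⟨fun n => if n.sqrt * n.sqrt = n then (μ n.sqrt : ℂ) else 0, by simp⟩

lemma sqmu_apply (n : ℕ) :
    sqmu n = if n.sqrt * n.sqrt = n then (μ n.sqrt : ℂ) else 0 := rfl

lemma sqmu_sq (m : ℕ) : sqmu (m * m) = (μ m : ℂ) := by
  rw [sqmu_apply, Nat.sqrt_eq, if_pos rfl]

/-- The squarefree indicator function. -/
noncomputable def sqf : ArithmeticFunction ℂ :=
  ⟨fun n => if Squarefree n then 1 else 0, by simp [not_squarefree_zero]⟩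

lemma sqf_apply (n : ℕ) : sqf n = if Squarefree n then 1 else 0 := rfl

lemma isMult_dsq : dsq.IsMultiplicative := by
  constructor
  · simp [dsq_apply]
  · intro m n hmn
    simp only [dsq_apply, mul_pow]
    rw [Nat.Coprime.card_divisors_mul (Nat.Coprime.pow _ _ hmn)]
    push_cast
    ring

lemma isMult_sqf : sqf.IsMultiplicative := by
  constructor
  · simp [sqf_apply]
  · intro m n hmn
    by_cases hm : Squarefree m <;> by_cases hn : Squarefree n <;>
      simp [sqf_apply, Nat.squarefree_mul hmn, hm, hn]

lemma isMult_sqmu : sqmu.IsMultiplicative := by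
  constructor
  · simp [sqmu_apply]
  · intro m n hmn
    by_cases hm : m.sqrt * m.sqrt = m
    · by_cases hn : n.sqrt * n.sqrt = n
      · have h : (m.sqrt * n.sqrt) * (m.sqrt * n.sqrt) = m * n := by
          rw [mul_mul_mul_comm, hm, hn]
        have hcop : (m.sqrt).Coprime n.sqrt :=
          Nat.Coprime.coprime_dvd_left (Dvd.intro _ hm)
            (Nat.Coprime.coprime_dvd_right (Dvd.intro _ hn) hmn)
        calc sqmu (m * n) = sqmu ((m.sqrt * n.sqrt) * (m.sqrt * n.sqrt)) := by rw [h]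
          _ = (μ (m.sqrt * n.sqrt) : ℂ) := sqmu_sq _
          _ = sqmu m * sqmu n := by
              rw [isMultiplicative_moebius.map_mul_of_coprime hcop,
                sqmu_apply m, sqmu_apply n, if_pos hm, if_pos hn]
              push_cast; ring
      · -- n is not a square, so m * n is not a square
        have hmn' : ¬ (m * n).sqrt * (m * n).sqrt = m * n := by
          intro h
          have h2 : n * m = ((m * n).sqrt) ^ 2 := by
            rw [sq, mul_comm n m]; exact h.symm
          obtain ⟨d, hd⟩ := exists_eq_pow_of_mul_eq_pow
            (by rw [Nat.isUnit_iff]; exact hmn.symm) h2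
          exact hn (by rw [hd, sq, Nat.sqrt_eq])
        rw [sqmu_apply (m * n), if_neg hmn', sqmu_apply n, if_neg hn, mul_zero]
    · -- m is not a square, so m * n is not a square
      have hmn' : ¬ (m * n).sqrt * (m * n).sqrt = m * n := by
        intro h
        have h2 : m * n = ((m * n).sqrt) ^ 2 := by rw [sq]; exact h.symm
        obtain ⟨d, hd⟩ := exists_eq_pow_of_mul_eq_pow
          (by rw [Nat.isUnit_iff]; exact hmn) h2
        exact hm (by rw [hd, sq, Nat.sqrt_eq])
      rw [sqmu_apply (m * n), if_neg hmn', sqmu_apply m, if_neg hm, zero_mul]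

lemma sqmu_prime_pow {p : ℕ} (hp : p.Prime) (i : ℕ) :
    sqmu (p ^ i) = if i = 0 then 1 else if i = 2 then -1 else 0 := by
  rcases Nat.even_or_odd i with ⟨j, rfl⟩ | hodd
  · have h : p ^ (j + j) = (p ^ j) * (p ^ j) := by rw [← pow_add]
    rw [h, sqmu_sq]
    rcases j with _ | _ | j
    · simp
    · simp [moebius_apply_prime hp]
    · rw [moebius_apply_prime_pow hp (by omega), if_neg (by omega)]
      rw [if_neg (by omega), if_neg (by omega)]
      simp
  · have hcond : ¬ (p ^ i).sqrt * (p ^ i).sqrt = p ^ i := by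
      intro h
      have ha : (p ^ i).sqrt ≠ 0 := by
        intro h0
        rw [h0] at h
        exact (pow_ne_zero i hp.pos.ne') h.symm
      have hΩ : Ω (p ^ i) = Ω ((p ^ i).sqrt) + Ω ((p ^ i).sqrt) := by
        conv_lhs => rw [← h]
        exact cardFactors_mul ha ha
      rw [cardFactors_apply_prime_pow hp] at hΩ
      exact (Nat.not_even_iff_odd.mpr hodd) ⟨_, hΩ⟩
    rw [sqmu_apply, if_neg hcond]
    have h3 : i ≠ 0 := by rintro rfl; exact (Nat.not_even_iff_odd.mpr hodd) Even.zero
    have h4 : i ≠ 2 := by rintro rfl; exact (Nat.not_even_iff_odd.mpr hodd) (by norm_num)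
    simp [h3, h4]

lemma zeta_mul_sqmu : (↑ζ : ArithmeticFunction ℂ) * sqmu = sqf := by
  rw [IsMultiplicative.eq_iff_eq_on_prime_powers _
    (isMultiplicative_zeta.natCast.mul isMult_sqmu) _ isMult_sqf]
  intro p k hp
  rw [mul_apply, Nat.sum_divisorsAntidiagonal' (f := fun x y => (↑ζ : ArithmeticFunction ℂ) x * sqmu y),
    Nat.sum_divisors_prime_pow hp]
  have hterm : ∀ i ∈ range (k + 1),
      (↑ζ : ArithmeticFunction ℂ) (p ^ k / p ^ i) * sqmu (p ^ i) =
        (if i = 0 then 1 else 0) + (if i = 2 then (-1 : ℂ) else 0) := by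
    intro i hi
    rw [Finset.mem_range] at hi
    have hdvd : p ^ k / p ^ i = p ^ (k - i) := Nat.pow_div (by omega) hp.pos
    rw [hdvd, natCoe_apply, zeta_apply_ne (pow_ne_zero _ hp.pos.ne'), Nat.cast_one, one_mul,
      sqmu_prime_pow hp]
    split_ifs <;> simp_all
  rw [Finset.sum_congr rfl hterm, Finset.sum_add_distrib,
    Finset.sum_ite_eq' (range (k + 1)) 0 (fun _ => (1 : ℂ)),
    Finset.sum_ite_eq' (range (k + 1)) 2 (fun _ => (-1 : ℂ))]
  rw [sqf_apply]
  have hsqf : Squarefree (p ^ k) ↔ k ≤ 1 := by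
    rcases Nat.eq_zero_or_pos k with rfl | hk
    · simp
    · rw [Nat.squarefree_pow_iff hp.ne_one (by omega)]
      constructor
      · rintro ⟨-, rfl⟩; exact le_refl 1
      · intro h
        have : k = 1 := by omega
        exact ⟨hp.squarefree, this⟩
  rcases Nat.lt_or_ge k 2 with hk | hk
  · rw [if_pos (hsqf.mpr (by omega)), if_pos (Finset.mem_range.mpr (by omega)),
      if_neg (fun h => by rw [Finset.mem_range] at h; omega)]
    ring
  · rw [if_neg (fun hsf => absurd (hsqf.mp hsf) (by omega)),
      if_pos (Finset.mem_range.mpr (by omega)), if_pos (Finset.mem_range.mpr (by omega))]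
    ring

lemma dsq_eq : dsq = (↑(σ 0) : ArithmeticFunction ℂ) * sqf := by
  rw [IsMultiplicative.eq_iff_eq_on_prime_powers _ isMult_dsq _
    (isMultiplicative_sigma.natCast.mul isMult_sqf)]
  intro p k hp
  rw [dsq_apply, ← pow_mul, ← sigma_zero_apply, sigma_zero_apply_prime_pow hp]
  rw [mul_apply, Nat.sum_divisorsAntidiagonal' (f := fun x y => (↑(σ 0) : ArithmeticFunction ℂ) x * sqf y),
    Nat.sum_divisors_prime_pow hp]
  have hterm : ∀ i ∈ range (k + 1),
      (↑(σ 0) : ArithmeticFunction ℂ) (p ^ k / p ^ i) * sqf (p ^ i) =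
        (if i = 0 then ((k : ℂ) + 1) else 0) + (if i = 1 then (k : ℂ) else 0) := by
    intro i hi
    rw [Finset.mem_range] at hi
    have hdvd : p ^ k / p ^ i = p ^ (k - i) := Nat.pow_div (by omega) hp.pos
    rw [hdvd, natCoe_apply, sigma_zero_apply_prime_pow hp, sqf_apply]
    have hsq : Squarefree (p ^ i) ↔ i ≤ 1 := by
      rcases Nat.eq_zero_or_pos i with rfl | hi0
      · simp
      · rw [Nat.squarefree_pow_iff hp.ne_one (by omega)]
        constructor
        · rintro ⟨-, rfl⟩; exact le_refl 1
        · intro h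
          have : i = 1 := by omega
          exact ⟨hp.squarefree, this⟩
    rcases Nat.lt_or_ge i 2 with hlt | hge
    · rw [if_pos (hsq.mpr (by omega))]
      interval_cases i
      · simp
      · have h1 : 1 ≤ k := by omega
        have : k - 1 + 1 = k := by omega
        push_cast [this]
        simp
    · rw [if_neg (by rw [hsq]; omega)]
      have h1 : i ≠ 0 := by omega
      have h2 : i ≠ 1 := by omega
      simp [h1, h2]
  rw [Finset.sum_congr rfl hterm, Finset.sum_add_distrib,
    Finset.sum_ite_eq' (range (k + 1)) 0 (fun _ => ((k : ℂ) + 1)),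
    Finset.sum_ite_eq' (range (k + 1)) 1 (fun _ => (k : ℂ))]
  rcases Nat.eq_zero_or_pos k with rfl | hk
  · simp
  · rw [if_pos (Finset.mem_range.mpr (by omega)), if_pos (Finset.mem_range.mpr (by omega))]
    push_cast
    ring

lemma hs2re (s : ℂ) : (2 * s).re = 2 * s.re := by
  simp [Complex.mul_re]

lemma summable_zeta' {s : ℂ} (hs : 1 < s.re) :
    LSeriesSummable (fun n => (↑ζ : ArithmeticFunction ℂ) n) s := by
  have := (LSeriesSummable_zeta_iff).mpr hs
  refine this.congr fun n => ?_
  simp [natCoe_apply]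

lemma summable_sqmu {s : ℂ} (hs : 1 < s.re) :
    LSeriesSummable (fun n => sqmu n) s := by
  refine LSeriesSummable_of_bounded_of_one_lt_re (m := 1) (fun n _ => ?_) hs
  rw [sqmu_apply]
  split_ifs with h
  · rw [Complex.norm_intCast]
    exact_mod_cast abs_moebius_le_one
  · simp

lemma term_sqmu_sq (s : ℂ) (m : ℕ) :
    LSeries.term (fun n => sqmu n) s (m * m) =
      LSeries.term (fun n => ((μ n : ℤ) : ℂ)) (2 * s) m := by
  rcases Nat.eq_zero_or_pos m with rfl | hm
  · simp [LSeries.term]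
  · have hmm : m * m ≠ 0 := by positivity
    rw [LSeries.term_of_ne_zero hmm, LSeries.term_of_ne_zero hm.ne', sqmu_sq]
    congr 1
    -- ((m*m : ℕ) : ℂ) ^ s = (m : ℂ) ^ (2 * s)
    have hlog : (Complex.log (m : ℂ) * 2).im = 0 := by
      have : (Complex.log (m : ℂ)).im = 0 := by
        rw [Complex.log_im, Complex.natCast_arg]
      simp [Complex.mul_im, this]
    rw [Complex.cpow_mul _ (by rw [hlog]; exact neg_lt_zero.mpr Real.pi_pos) (by rw [hlog]; exact Real.pi_pos.le)]
    push_cast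
    rw [show ((2 : ℂ)) = ((2 : ℕ) : ℂ) by norm_num, Complex.cpow_natCast]
    ring

lemma LSeries_sqmu {s : ℂ} (hs : 1 < s.re) :
    LSeries (fun n => sqmu n) s = (riemannZeta (2 * s))⁻¹ := by
  have hs2 : 1 < (2 * s).re := by rw [hs2re]; linarith
  have hinj : Function.Injective (fun m : ℕ => m * m) := fun a b h => by
    simpa [Nat.sqrt_eq] using congrArg Nat.sqrt h
  have hsupp : Function.support (LSeries.term (fun n => sqmu n) s) ⊆
      Set.range (fun m : ℕ => m * m) := by
    intro n hn
    rcases Nat.eq_zero_or_pos n with rfl | hn0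
    · simp [LSeries.term] at hn
    · have : sqmu n ≠ 0 := by
        intro h0
        apply hn
        rw [LSeries.term_of_ne_zero hn0.ne', h0, zero_div]
      rw [sqmu_apply] at this
      by_cases h : n.sqrt * n.sqrt = n
      · exact ⟨n.sqrt, h⟩
      · simp [h] at this
    
  have key := Function.Injective.tsum_eq hinj (f := LSeries.term (fun n => sqmu n) s) hsupp
  have : LSeries (fun n => sqmu n) s = LSeries (fun n => ((μ n : ℤ) : ℂ)) (2 * s) := by
    rw [LSeries, LSeries, ← key]
    exact tsum_congr fun m => term_sqmu_sq s m
  rw [this]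
  have hmul := LSeries_zeta_mul_Lseries_moebius hs2
  rw [LSeries_zeta_eq_riemannZeta hs2] at hmul
  have hne := riemannZeta_ne_zero_of_one_lt_re hs2
  field_simp at hmul ⊢
  linear_combination hmul

theorem dirichlet_series_divisor_sq (s : ℂ) (hs : 1 < s.re) :
    ∑' n : ℕ+, ((Nat.divisors ((n : ℕ) ^ 2)).card : ℂ) / (n : ℂ) ^ s =
      riemannZeta s ^ 3 / riemannZeta (2 * s) := by
  have hζ := summable_zeta' hs
  have hsqmu := summable_sqmu hs
  -- dsq = ζ * ζ * (ζ * sqmu)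
  have hdecomp : dsq = (↑ζ : ArithmeticFunction ℂ) * (↑ζ : ArithmeticFunction ℂ) *
      ((↑ζ : ArithmeticFunction ℂ) * sqmu) := by
    rw [zeta_mul_sqmu, dsq_eq]
    congr 1
    rw [← zeta_mul_pow_eq_sigma, pow_zero_eq_zeta, natCoe_mul]
  -- LHS equals LSeries of dsq
  have hLHS : ∑' n : ℕ+, ((Nat.divisors ((n : ℕ) ^ 2)).card : ℂ) / (n : ℂ) ^ s =
      LSeries (fun n => dsq n) s := by
    have hinj : Function.Injective (fun n : ℕ+ => (n : ℕ)) :=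
      fun a b h => PNat.coe_injective h
    have hsupp : Function.support (LSeries.term (fun n => dsq n) s) ⊆
        Set.range (fun n : ℕ+ => (n : ℕ)) := by
      intro n hn
      rcases Nat.eq_zero_or_pos n with rfl | hn0
      · simp [LSeries.term] at hn
      · exact ⟨⟨n, hn0⟩, rfl⟩
    rw [LSeries, ← Function.Injective.tsum_eq hinj hsupp]
    refine tsum_congr fun n => ?_
    rw [LSeries.term_of_ne_zero (n := (n : ℕ)) n.pos.ne', dsq_apply]
  rw [hLHS, hdecomp]
  rw [LSeries_mul' (LSeriesSummable_mul hζ hζ) (LSeriesSummable_mul hζ hsqmu),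
    LSeries_mul' hζ hζ, LSeries_mul' hζ hsqmu]
  have hz : LSeries (fun n => (↑ζ : ArithmeticFunction ℂ) n) s = riemannZeta s := by
    rw [← LSeries_zeta_eq_riemannZeta hs]
    exact LSeries_congr (by intro n _; rfl) s
  rw [hz, LSeries_sqmu hs]
  field_simp
end

section
/- For every nonnegative integer m, the limit γ_m = lim_{n→∞} ( ∑_{k=1}^n (log k)^m / k − (log n)^(m+1)/(m+1) ) exists (these are the Stieltjes constants). -/
open Filter Topology Real

noncomputable def sfun (m : ℕ) (x : ℝ) : ℝ := Real.log x ^ m / x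
noncomputable def sF (m : ℕ) (x : ℝ) : ℝ := Real.log x ^ (m+1) / (m+1)

lemma hasDerivAt_sF (m : ℕ) {x : ℝ} (hx : 0 < x) :
    HasDerivAt (sF m) (sfun m x) x := by
  have h := ((Real.hasDerivAt_log hx.ne').pow (m+1)).div_const (m+1)
  simp only [Nat.add_sub_cancel] at h
  refine h.congr_deriv ?_
  unfold sfun
  have : ((m:ℝ)+1) ≠ 0 := by positivity
  field_simp
  push_cast
  ring

lemma continuousOn_sfun (m : ℕ) {s : Set ℝ} (hs : ∀ x ∈ s, x ≠ 0) :
    ContinuousOn (sfun m) s := by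
  apply ContinuousOn.div
  · exact (Real.continuousOn_log.mono hs).pow m
  · exact continuousOn_id
  · exact hs

lemma integral_sfun (m : ℕ) {a b : ℝ} (ha : 0 < a) (hab : a ≤ b) :
    ∫ x in a..b, sfun m x = sF m b - sF m a := by
  apply intervalIntegral.integral_eq_sub_of_hasDerivAt
  · intro x hx
    rw [Set.uIcc_of_le hab] at hx
    exact hasDerivAt_sF m (lt_of_lt_of_le ha hx.1)
  · apply ContinuousOn.intervalIntegrable
    apply continuousOn_sfun
    intro x hx
    rw [Set.uIcc_of_le hab] at hx
    exact (lt_of_lt_of_le ha hx.1).ne'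

lemma antitoneOn_sfun (m : ℕ) : AntitoneOn (sfun m) (Set.Ici (Real.exp m)) := by
  have hepos : (0:ℝ) < Real.exp m := Real.exp_pos m
  apply antitoneOn_of_deriv_nonpos (convex_Ici _)
  · exact continuousOn_sfun m (fun x hx => (lt_of_lt_of_le hepos hx).ne')
  · intro x hx
    rw [interior_Ici] at hx
    have hx0 : 0 < x := lt_trans hepos hx
    exact (((Real.hasDerivAt_log hx0.ne').pow m).div (hasDerivAt_id x) hx0.ne').differentiableAt.differentiableWithinAt
  · intro x hx
    rw [interior_Ici] at hx
    have hx0 : 0 < x := lt_trans hepos hx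
    have hL : (m:ℝ) ≤ Real.log x := by
      rw [← Real.log_exp (m:ℝ)]
      exact Real.log_le_log (Real.exp_pos _) hx.le
    have hd := ((Real.hasDerivAt_log hx0.ne').pow m).div (hasDerivAt_id x) hx0.ne'
    have hd' : HasDerivAt (sfun m) (((m:ℝ) * Real.log x ^ (m-1) * x⁻¹ * x - Real.log x ^ m * 1) / x ^ 2) x := by
      exact hd
    rw [hd'.deriv]
    rw [div_nonpos_iff]
    right
    constructor
    · have hnum : (m:ℝ) * Real.log x ^ (m-1) * x⁻¹ * x - Real.log x ^ m * 1
          = (m:ℝ) * Real.log x ^ (m-1) - Real.log x ^ m := by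
        field_simp
      rw [hnum]
      cases m with
      | zero => norm_num
      | succ k =>
        have hk : k + 1 - 1 = k := rfl
        rw [hk, pow_succ]
        have hLnn : (0:ℝ) ≤ Real.log x ^ k := by
          apply pow_nonneg
          linarith [Nat.cast_nonneg (α := ℝ) (k+1)]
        have hL' : (k:ℝ)+1 ≤ Real.log x := by push_cast at hL; exact hL
        nlinarith [mul_le_mul_of_nonneg_left hL' hLnn]
    · positivity

noncomputable def gseq (m n : ℕ) : ℝ :=
  (∑ k ∈ Finset.Icc 1 n, (Real.log k) ^ m / k) - sF m n

lemma sfun_nonneg (m : ℕ) {x : ℝ} (hx : 1 ≤ x) : 0 ≤ sfun m x := by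
  unfold sfun
  apply div_nonneg _ (by linarith)
  exact pow_nonneg (Real.log_nonneg hx) m

lemma gseq_step (m n : ℕ) (hn : 1 ≤ n) :
    gseq m (n+1) = gseq m n + sfun m ((n:ℝ)+1) - ∫ x in (n:ℝ)..((n:ℝ)+1), sfun m x := by
  have hpos : (0:ℝ) < n := by exact_mod_cast hn
  rw [integral_sfun m hpos (by linarith)]
  unfold gseq sfun sF
  rw [Finset.sum_Icc_succ_top (by omega)]
  push_cast
  ring

lemma intable (m n : ℕ) (hn : 1 ≤ n) :
    IntervalIntegrable (sfun m) MeasureTheory.volume (n:ℝ) ((n:ℝ)+1) := by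
  have hpos : (0:ℝ) < n := by exact_mod_cast hn
  apply ContinuousOn.intervalIntegrable
  apply continuousOn_sfun
  intro x hx
  rw [Set.uIcc_of_le (by linarith)] at hx
  linarith [hx.1]

lemma step_le (m : ℕ) {n : ℕ} (hc : Real.exp m ≤ n) (hn : 1 ≤ n) :
    gseq m (n+1) ≤ gseq m n := by
  rw [gseq_step m n hn]
  have hint : sfun m ((n:ℝ)+1) ≤ ∫ x in (n:ℝ)..((n:ℝ)+1), sfun m x := by
    have := intervalIntegral.integral_mono_on (μ := MeasureTheory.volume)
      (f := fun _ => sfun m ((n:ℝ)+1)) (g := sfun m) (by linarith : (n:ℝ) ≤ (n:ℝ)+1)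
      intervalIntegrable_const (intable m n hn) ?_
    · simpa using this
    · intro x hx
      exact antitoneOn_sfun m (le_trans hc hx.1) (le_trans hc (by linarith [hx.2])) hx.2
  linarith

lemma step_ge (m : ℕ) {n : ℕ} (hc : Real.exp m ≤ n) (hn : 1 ≤ n) :
    gseq m n - sfun m n ≤ gseq m (n+1) - sfun m ((n:ℝ)+1) := by
  rw [gseq_step m n hn]
  have hint : (∫ x in (n:ℝ)..((n:ℝ)+1), sfun m x) ≤ sfun m n := by
    have := intervalIntegral.integral_mono_on (μ := MeasureTheory.volume)
      (f := sfun m) (g := fun _ => sfun m (n:ℝ)) (by linarith : (n:ℝ) ≤ (n:ℝ)+1)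
      (intable m n hn) intervalIntegrable_const ?_
    · simpa using this
    · intro x hx
      exact antitoneOn_sfun m hc (le_trans hc hx.1) hx.1
  linarith

theorem stieltjes_constants_exist' (m : ℕ) :
    ∃ γm : ℝ, Tendsto (gseq m) atTop (𝓝 γm) := by
  set N : ℕ := ⌈Real.exp m⌉₊ + 1 with hN
  have hN1 : 1 ≤ N := by omega
  have hNc : Real.exp m ≤ (N:ℝ) := by
    have := Nat.le_ceil (Real.exp m)
    push_cast [hN]
    linarith
  have hcn : ∀ j : ℕ, Real.exp m ≤ ((j + N : ℕ) : ℝ) := by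
    intro j
    have : (N:ℝ) ≤ ((j + N : ℕ):ℝ) := by exact_mod_cast Nat.le_add_left N j
    linarith
  have h1n : ∀ j : ℕ, 1 ≤ j + N := fun j => le_trans hN1 (Nat.le_add_left N j)
  -- antitone
  have hanti : Antitone (fun j => gseq m (j + N)) := by
    apply antitone_nat_of_succ_le
    intro j
    have := step_le m (hcn j) (h1n j)
    simpa [Nat.add_right_comm] using this
  -- lower bound
  have hlow : ∀ j : ℕ, gseq m N - sfun m N ≤ gseq m (j + N) - sfun m ((j + N : ℕ):ℝ) := by
    intro j
    induction j with
    | zero => simp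
    | succ k ih =>
      have hstep := step_ge m (hcn k) (h1n k)
      have hcast : (((k + N : ℕ):ℝ) + 1) = (((k+1) + N : ℕ):ℝ) := by push_cast; ring
      rw [hcast] at hstep
      have : k + N + 1 = (k+1) + N := by omega
      rw [this] at hstep
      linarith
  have hbdd : BddBelow (Set.range fun j => gseq m (j + N)) := by
    refine ⟨gseq m N - sfun m N, ?_⟩
    rintro y ⟨j, rfl⟩
    have := hlow j
    have hnn : 0 ≤ sfun m ((j + N : ℕ):ℝ) := by
      apply sfun_nonneg
      exact_mod_cast h1n j
    linarith
  have htend := tendsto_atTop_ciInf hanti hbdd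
  exact ⟨_, (Filter.tendsto_add_atTop_iff_nat N).1 htend⟩

theorem stieltjes_constants_exist (m : ℕ) :
    ∃ γm : ℝ, Tendsto (fun n : ℕ =>
        (∑ k ∈ Finset.Icc 1 n, (Real.log k) ^ m / k) -
          (Real.log n) ^ (m + 1) / (m + 1))
      atTop (𝓝 γm) := by
  obtain ⟨γ, hγ⟩ := stieltjes_constants_exist' m
  refine ⟨γ, ?_⟩
  convert hγ using 2 with n
  rfl
end
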